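/- Let m ≥ 1, let A be an m×m complex matrix, let s₀ ∈ ℝ, and suppose max{Re λ : λ ∈ σ(A)} ≤ s₀. Then for every t ≥ 0 one has ‖exp(tA)‖ ≤ e^{s₀ t} · (1 + 2t)^{m−1} · (1 + ‖A‖)^{m−1}. -/

import Mathlib

open scoped Matrix.Norms.L2Operator InnerProductSpace
open Module FiniteDimensional

noncomputable section ShilovAux






def endCLM (V : Type) [NormedAddCommGroup V] [NormedSpace ℂ V] [FiniteDimensional ℂ V] :
    (V →ₗ[ℂ] V) ≃ₐ[ℂ] (V →L[ℂ] V) :=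
  AlgEquiv.ofLinearEquiv (LinearMap.toContinuousLinearMap (E := V) (F' := V))
    (by ext x; rfl) (fun f g => by ext x; rfl)

def PsiM {m : ℕ} (b : OrthonormalBasis (Fin m) ℂ (EuclideanSpace ℂ (Fin m))) :
    Matrix (Fin m) (Fin m) ℂ ≃ₐ[ℂ] (EuclideanSpace ℂ (Fin m) →L[ℂ] EuclideanSpace ℂ (Fin m)) :=
  (LinearMap.toMatrixAlgEquiv b.toBasis).symm.trans (endCLM _)

lemma PsiM_symm_apply {m : ℕ} (b : OrthonormalBasis (Fin m) ℂ (EuclideanSpace ℂ (Fin m)))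
    (g : EuclideanSpace ℂ (Fin m) →L[ℂ] EuclideanSpace ℂ (Fin m)) :
    (PsiM b).symm g = LinearMap.toMatrix b.toBasis b.toBasis (g : _ →ₗ[ℂ] _) := by
  rw [AlgEquiv.symm_apply_eq, PsiM, AlgEquiv.trans_apply]
  have : (LinearMap.toMatrixAlgEquiv b.toBasis).symm
      (LinearMap.toMatrix b.toBasis b.toBasis (g : _ →ₗ[ℂ] _)) = (g : _ →ₗ[ℂ] _) := by
    rw [AlgEquiv.symm_apply_eq]; rfl
  rw [this]
  ext x
  rfl

lemma PsiM_mulVec {m : ℕ} (b : OrthonormalBasis (Fin m) ℂ (EuclideanSpace ℂ (Fin m)))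
    (M : Matrix (Fin m) (Fin m) ℂ) (y : EuclideanSpace ℂ (Fin m)) :
    Matrix.toEuclideanCLM (𝕜 := ℂ) M (b.repr y) = b.repr (PsiM b M y) := by
  have hM : LinearMap.toMatrix b.toBasis b.toBasis ((PsiM b M : _ →L[ℂ] _) : _ →ₗ[ℂ] _) = M := by
    rw [← PsiM_symm_apply, AlgEquiv.symm_apply_apply]
  apply (WithLp.equiv 2 _).injective
  show (Matrix.mulVec M ((WithLp.equiv 2 _) (b.repr y))) = _
  have h1 : (WithLp.equiv 2 _) (b.repr y) = ⇑(b.toBasis.repr y) := by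
    funext i; simp [OrthonormalBasis.coe_toBasis_repr_apply]
  have h2 : (WithLp.equiv 2 _) (b.repr (PsiM b M y)) = ⇑(b.toBasis.repr (PsiM b M y)) := by
    funext i; simp [OrthonormalBasis.coe_toBasis_repr_apply]
  have key := LinearMap.toMatrix_mulVec_repr b.toBasis b.toBasis
    ((PsiM b M : _ →L[ℂ] _) : _ →ₗ[ℂ] _) y
  rw [hM] at key
  rw [h1, h2, key]
  rfl



lemma PsiM_norm {m : ℕ} (b : OrthonormalBasis (Fin m) ℂ (EuclideanSpace ℂ (Fin m)))
    (M : Matrix (Fin m) (Fin m) ℂ) : ‖PsiM b M‖ = ‖M‖ := by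
  refine le_antisymm ?_ ?_
  · refine ContinuousLinearMap.opNorm_le_bound _ (norm_nonneg M) fun y => ?_
    calc ‖PsiM b M y‖ = ‖b.repr (PsiM b M y)‖ := (b.repr.norm_map _).symm
    _ = ‖Matrix.toEuclideanCLM (𝕜 := ℂ) M (b.repr y)‖ := by rw [PsiM_mulVec]
    _ ≤ ‖Matrix.toEuclideanCLM (𝕜 := ℂ) M‖ * ‖b.repr y‖ :=
        ContinuousLinearMap.le_opNorm _ _
    _ = ‖M‖ * ‖y‖ := by rw [← Matrix.cstar_norm_def, b.repr.norm_map]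
  · rw [Matrix.cstar_norm_def]
    refine ContinuousLinearMap.opNorm_le_bound _ (norm_nonneg _) fun x => ?_
    have h := PsiM_mulVec b M (b.repr.symm x)
    rw [b.repr.apply_symm_apply] at h
    calc ‖Matrix.toEuclideanCLM (𝕜 := ℂ) M x‖ = ‖b.repr (PsiM b M (b.repr.symm x))‖ := by rw [h]
    _ = ‖PsiM b M (b.repr.symm x)‖ := b.repr.norm_map _
    _ ≤ ‖PsiM b M‖ * ‖b.repr.symm x‖ := ContinuousLinearMap.le_opNorm _ _
    _ = ‖PsiM b M‖ * ‖x‖ := by rw [b.repr.symm.norm_map]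




/-- Schur triangularization, endomorphism form. -/
lemma schur_aux : ∀ (n : ℕ) (V : Type) [NormedAddCommGroup V] [InnerProductSpace ℂ V]
    [FiniteDimensional ℂ V], finrank ℂ V = n → ∀ f : V →ₗ[ℂ] V,
    ∃ b : OrthonormalBasis (Fin n) ℂ V, ∀ i j : Fin n, j < i → ⟪b i, f (b j)⟫_ℂ = 0 := by
  intro n
  induction n with
  | zero =>
    intro V _ _ _ hd f
    haveI : Subsingleton V := finrank_zero_iff.mp hd
    refine ⟨OrthonormalBasis.mk (v := fun i : Fin 0 => (0 : V)) ?_ ?_, fun i => i.elim0⟩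
    · rw [orthonormal_iff_ite]; exact fun i => i.elim0
    · intro x _
      rw [Subsingleton.elim x 0]
      exact Submodule.zero_mem _
  | succ n IH =>
    intro V _ _ _ hd f
    haveI : Nontrivial V := by
      have h0 : 0 < finrank ℂ V := by omega
      exact Module.finrank_pos_iff.mp h0
    obtain ⟨μ, hμ⟩ := Module.End.exists_eigenvalue (LinearMap.adjoint f)
    obtain ⟨v, hv⟩ := hμ.exists_hasEigenvector
    set u : V := (‖v‖⁻¹ : ℂ) • v with hu_def
    have hu0 : u ≠ 0 := by
      apply smul_ne_zero _ hv.2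
      simpa using hv.2
    have hu1 : ‖u‖ = 1 := norm_smul_inv_norm hv.2
    have hadj : LinearMap.adjoint f u = μ • u := by
      rw [hu_def, map_smul, hv.apply_eq_smul, smul_comm]
    set W : Submodule ℂ V := (ℂ ∙ u)ᗮ with hW_def
    have hWinv : ∀ x ∈ W, f x ∈ W := by
      intro x hx
      intro w hw
      obtain ⟨a, rfl⟩ := Submodule.mem_span_singleton.mp hw
      have hux : ⟪u, x⟫_ℂ = 0 := hx u (Submodule.mem_span_singleton_self u)
      rw [inner_smul_left]
      have : ⟪u, f x⟫_ℂ = 0 := by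
        rw [← LinearMap.adjoint_inner_left, hadj, inner_smul_left, hux, mul_zero]
      rw [this, mul_zero]
    haveI : Fact (finrank ℂ V = n + 1) := ⟨hd⟩
    have hrank : finrank ℂ W = n := Submodule.finrank_orthogonal_span_singleton hu0
    obtain ⟨c, hc⟩ := IH W hrank (f.restrict hWinv)
    set β : Fin (n+1) → V := Fin.snoc (fun i => (c i : V)) u with hβ
    have horth : Orthonormal ℂ β := by
      rw [orthonormal_iff_ite]
      intro i j
      refine Fin.lastCases ?_ ?_ i
      · refine Fin.lastCases ?_ ?_ j
        · simp only [hβ, Fin.snoc_last, if_pos rfl]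
          rw [@inner_self_eq_norm_sq_to_K ℂ, hu1]; norm_num
        · intro j'
          have h0 : ⟪u, (c j' : V)⟫_ℂ = 0 := (c j').2 u (Submodule.mem_span_singleton_self u)
          simp only [hβ, Fin.snoc_last, Fin.snoc_castSucc]
          rw [if_neg (by exact (Fin.castSucc_lt_last j').ne'), h0]
      · intro i'
        refine Fin.lastCases ?_ ?_ j
        · have h0 : ⟪u, (c i' : V)⟫_ℂ = 0 := (c i').2 u (Submodule.mem_span_singleton_self u)
          simp only [hβ, Fin.snoc_last, Fin.snoc_castSucc]
          rw [if_neg (by exact (Fin.castSucc_lt_last i').ne), inner_eq_zero_symm.mp h0]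
        · intro j'
          simp only [hβ, Fin.snoc_castSucc]
          have := orthonormal_iff_ite.mp c.orthonormal i' j'
          rw [Submodule.coe_inner] at this
          rw [this]
          congr 1
          simp [Fin.castSucc_inj]
    have hcard : Fintype.card (Fin (n+1)) = finrank ℂ V := by simp [hd]
    have li := horth.linearIndependent
    set bas := basisOfLinearIndependentOfCardEqFinrank li hcard with hbas_def
    have hbas : ⇑bas = β := coe_basisOfLinearIndependentOfCardEqFinrank li hcard
    refine ⟨bas.toOrthonormalBasis (by rwa [hbas]), ?_⟩
    have hb : ⇑(bas.toOrthonormalBasis (by rwa [hbas])) = β := by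
      rw [Basis.coe_toOrthonormalBasis, hbas]
    rw [hb]
    intro i j
    induction j using Fin.lastCases with
    | last => exact fun hji => absurd hji (by simpa using (Fin.le_last i).not_gt)
    | cast j' =>
      induction i using Fin.lastCases with
      | last =>
        intro _
        have hmem : f ((c j' : V)) ∈ W := hWinv _ (c j').2
        simp only [hβ, Fin.snoc_castSucc, Fin.snoc_last]
        exact hmem u (Submodule.mem_span_singleton_self u)
      | cast i' =>
        intro hji
        have hji' : j' < i' := by simpa [Fin.castSucc_lt_castSucc_iff] using hji
        simp only [hβ, Fin.snoc_castSucc]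
        have hres : f ((c j' : V)) = ((f.restrict hWinv) (c j') : V) :=
          (LinearMap.restrict_coe_apply _ _ _).symm
        rw [hres]
        have h2 := hc i' j' hji'
        rwa [Submodule.coe_inner] at h2



lemma superdiag_norm {m : ℕ} (M : Matrix (Fin m) (Fin m) ℂ) (k : ℕ) (c : ℝ) (hc : 0 ≤ c)
    (hk : ∀ i j, M i j ≠ 0 → (j : ℕ) = (i : ℕ) + k) (hb : ∀ i j, ‖M i j‖ ≤ c) :
    ‖M‖ ≤ c := by
  rw [Matrix.cstar_norm_def]
  refine ContinuousLinearMap.opNorm_le_bound _ hc fun x => ?_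
  set y := Matrix.toEuclideanCLM (𝕜 := ℂ) M x with hy
  have hyi : ∀ i, y i = ∑ j, M i j * x j := by
    intro i
    have h1 := congrFun (Matrix.ofLp_toEuclideanCLM (𝕜 := ℂ) M x) i
    simp only [hy, Matrix.ofLp_toEuclideanCLM, Matrix.mulVec, dotProduct]
  have hzero : ∀ i : Fin m, m ≤ (i : ℕ) + k → y i = 0 := by
    intro i hi
    rw [hyi]
    apply Finset.sum_eq_zero
    intro j _
    rcases eq_or_ne (M i j) 0 with h | h
    · rw [h, zero_mul]
    · exact absurd (hk i j h) (by have := j.isLt; omega)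
  set σ : Fin m → Fin m := fun i => if h : (i : ℕ) + k < m then ⟨(i : ℕ) + k, h⟩ else i with hσ
  have key : ∀ i : Fin m,
      ‖y i‖ ^ 2 ≤ c ^ 2 * (if (i : ℕ) + k < m then ‖x (σ i)‖ ^ 2 else 0) := by
    intro i
    by_cases h : (i : ℕ) + k < m
    · have hyy : y i = M i ⟨(i : ℕ) + k, h⟩ * x ⟨(i : ℕ) + k, h⟩ := by
        rw [hyi]
        refine Finset.sum_eq_single_of_mem (⟨(i : ℕ) + k, h⟩ : Fin m)
          (Finset.mem_univ _) fun j _ hj => ?_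
        rcases eq_or_ne (M i j) 0 with h0 | h0
        · rw [h0, zero_mul]
        · exact absurd (Fin.ext (hk i j h0) : j = ⟨(i : ℕ) + k, h⟩) hj
      have hgoal : σ i = ⟨(i : ℕ) + k, h⟩ := by simp only [hσ]; rw [dif_pos]
      rw [if_pos h, hgoal, hyy, norm_mul, mul_pow]
      have h1 := hb i ⟨(i : ℕ) + k, h⟩
      have h2 : (0:ℝ) ≤ ‖x ⟨(i : ℕ) + k, h⟩‖ ^ 2 := by positivity
      have h3 : ‖M i ⟨(i : ℕ) + k, h⟩‖ ^ 2 ≤ c ^ 2 := by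
        have := norm_nonneg (M i ⟨(i : ℕ) + k, h⟩); nlinarith
      nlinarith
    · simp only [if_neg h]
      rw [hzero i (by omega)]
      simp
  have sum1 : ∑ i : Fin m, ‖y i‖ ^ 2 ≤
      c ^ 2 * ∑ i : Fin m, (if (i : ℕ) + k < m then ‖x (σ i)‖ ^ 2 else 0) := by
    rw [Finset.mul_sum]
    exact Finset.sum_le_sum fun i _ => key i
  set S : Finset (Fin m) := Finset.univ.filter (fun i : Fin m => (i : ℕ) + k < m) with hS
  have sum2 : ∑ i : Fin m, (if (i : ℕ) + k < m then ‖x (σ i)‖ ^ 2 else 0) =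
      ∑ i ∈ S, ‖x (σ i)‖ ^ 2 := by
    rw [hS, Finset.sum_filter]
  have hinj : Set.InjOn σ S := by
    intro a ha b hb' hab
    simp only [hS, Finset.coe_filter, Set.mem_setOf_eq] at ha hb'
    have : (σ a : ℕ) = (σ b : ℕ) := by rw [hab]
    simp only [hσ, dif_pos ha.2, dif_pos hb'.2] at this
    exact Fin.ext (by omega)
  have sum3 : ∑ i ∈ S, ‖x (σ i)‖ ^ 2 = ∑ j ∈ S.image σ, ‖x j‖ ^ 2 :=
    (Finset.sum_image (f := fun j => ‖x j‖ ^ 2) (fun a ha b hb' hh =>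
      hinj (Finset.mem_coe.mpr ha) (Finset.mem_coe.mpr hb') hh)).symm
  have sum4 : ∑ j ∈ S.image σ, ‖x j‖ ^ 2 ≤ ∑ j : Fin m, ‖x j‖ ^ 2 := by
    apply Finset.sum_le_sum_of_subset_of_nonneg (Finset.subset_univ _)
    intro j _ _
    positivity
  have hfin : ∑ i : Fin m, ‖y i‖ ^ 2 ≤ c ^ 2 * ∑ j : Fin m, ‖x j‖ ^ 2 := by
    calc ∑ i : Fin m, ‖y i‖ ^ 2 ≤ c ^ 2 * ∑ i : Fin m,
        (if (i : ℕ) + k < m then ‖x (σ i)‖ ^ 2 else 0) := sum1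
    _ = c ^ 2 * ∑ i ∈ S, ‖x (σ i)‖ ^ 2 := by rw [sum2]
    _ = c ^ 2 * ∑ j ∈ S.image σ, ‖x j‖ ^ 2 := by rw [sum3]
    _ ≤ c ^ 2 * ∑ j : Fin m, ‖x j‖ ^ 2 := by
        apply mul_le_mul_of_nonneg_left sum4 (by positivity)
  rw [EuclideanSpace.norm_eq, EuclideanSpace.norm_eq]
  rw [show (c * Real.sqrt (∑ j : Fin m, ‖x j‖ ^ 2)) =
    Real.sqrt (c ^ 2 * ∑ j : Fin m, ‖x j‖ ^ 2) by
      rw [Real.sqrt_mul (by positivity), Real.sqrt_sq hc]]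
  exact Real.sqrt_le_sqrt hfin




def Df (K : ℝ) : ℕ → ℝ → ℝ
  | 0, _ => 1
  | (r+1), t => 2*K*t*(1+2*K*t)^r

lemma Df_nonneg {K t : ℝ} (hK : 0 ≤ K) (ht : 0 ≤ t) (k : ℕ) : 0 ≤ Df K k t := by
  cases k with
  | zero => norm_num [Df]
  | succ r =>
    unfold Df
    have h1 : (0:ℝ) ≤ 1 + 2*K*t := by positivity
    positivity

lemma Df_sum (K t : ℝ) (k : ℕ) : ∑ r ∈ Finset.range (k+1), Df K r t = (1+2*K*t)^k := by
  induction k with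
  | zero => simp [Df]
  | succ k ih => rw [Finset.sum_range_succ, ih]; unfold Df; ring

def entryLM {m : ℕ} (i j : Fin m) : Matrix (Fin m) (Fin m) ℂ →ₗ[ℂ] ℂ where
  toFun M := M i j
  map_add' _ _ := rfl
  map_smul' _ _ := rfl

def entryCLM {m : ℕ} (i j : Fin m) : Matrix (Fin m) (Fin m) ℂ →L[ℂ] ℂ :=
  LinearMap.toContinuousLinearMap (entryLM i j)

lemma exp_tri {m : ℕ} (T : Matrix (Fin m) (Fin m) ℂ)
    (htri : ∀ i j : Fin m, j < i → T i j = 0) (l j : Fin m) (hlj : j < l) (s : ℝ) :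
    NormedSpace.exp (s • T) l j = 0 := by
  have hBT : (s • T).BlockTriangular id := by
    intro p q h
    rw [Matrix.smul_apply, htri p q h, smul_zero]
  have hpow : ∀ n : ℕ, ((s • T) ^ n).BlockTriangular id := by
    intro n
    induction n with
    | zero => rw [pow_zero]; exact Matrix.blockTriangular_one
    | succ n ih => rw [pow_succ]; exact ih.mul hBT
  have h1 : NormedSpace.exp (s • T) = ∑' n : ℕ, ((n.factorial : ℂ)⁻¹) • (s • T) ^ n := by
    rw [NormedSpace.exp_eq_tsum ℂ]
  have h2 : entryCLM l j (NormedSpace.exp (s • T)) =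
      ∑' n : ℕ, entryCLM l j (((n.factorial : ℂ)⁻¹) • (s • T) ^ n) := by
    rw [h1]
    exact (entryCLM l j).map_tsum (NormedSpace.expSeries_summable' (𝕂 := ℂ) (s • T))
  have h3 : ∀ n : ℕ, entryCLM l j (((n.factorial : ℂ)⁻¹) • (s • T) ^ n) = 0 := by
    intro n
    have hz : ((s • T) ^ n) l j = 0 := hpow n (show id j < id l from hlj)
    rw [map_smul, show entryCLM l j ((s • T) ^ n) = ((s • T) ^ n) l j from rfl, hz, smul_zero]
  have h4 : NormedSpace.exp (s • T) l j = entryCLM l j (NormedSpace.exp (s • T)) := rfl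
  rw [h4, h2]
  calc ∑' n : ℕ, entryCLM l j (((n.factorial : ℂ)⁻¹) • (s • T) ^ n) = ∑' _ : ℕ, (0:ℂ) :=
      tsum_congr h3
  _ = 0 := tsum_zero



lemma exp_entry_deriv {m : ℕ} (T : Matrix (Fin m) (Fin m) ℂ) (i j : Fin m) (t : ℝ) :
    HasDerivAt (fun s : ℝ => NormedSpace.exp (s • T) i j)
      (∑ l : Fin m, T i l * NormedSpace.exp (t • T) l j) t := by
  have h0 : (NormedSpace.exp : Matrix (Fin m) (Fin m) ℂ → _) = NormedSpace.exp :=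
    rfl
  have hd : HasDerivAt (fun u : ℝ => NormedSpace.exp (u • T)) (T * NormedSpace.exp (t • T)) t :=
    hasDerivAt_exp_smul_const' (𝕂 := ℝ) T t
  have hφ := ((entryCLM i j).restrictScalars ℝ).hasFDerivAt
    (x := NormedSpace.exp (t • T))
  have hcomp := hφ.comp_hasDerivAt t hd
  have : ((entryCLM i j).restrictScalars ℝ) (T * NormedSpace.exp (t • T)) =
      ∑ l : Fin m, T i l * NormedSpace.exp (t • T) l j := by
    show (T * NormedSpace.exp (t • T)) i j = _
    rw [Matrix.mul_apply, ← h0]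
  rw [this] at hcomp
  have hfun : (fun s : ℝ => NormedSpace.exp (s • T) i j) =
      (fun s : ℝ => ((entryCLM i j).restrictScalars ℝ) (NormedSpace.exp (s • T))) := by
    funext s; rw [← h0]; rfl
  rw [hfun]
  exact hcomp

lemma exp_entry_continuous {m : ℕ} (T : Matrix (Fin m) (Fin m) ℂ) (p q : Fin m) :
    Continuous (fun s : ℝ => NormedSpace.exp (s • T) p q) :=
  continuous_iff_continuousAt.mpr fun s => (exp_entry_deriv T p q s).continuousAt



lemma entry_bound {m : ℕ} (T : Matrix (Fin m) (Fin m) ℂ) (s₀ K : ℝ)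
    (hK0 : 0 ≤ K) (htri : ∀ i j : Fin m, j < i → T i j = 0)
    (hdiag : ∀ i, (T i i).re ≤ s₀) (hK : ∀ i j, ‖T i j‖ ≤ K) :
    ∀ k : ℕ, ∀ i j : Fin m, (j : ℕ) - (i : ℕ) = k → ∀ t : ℝ, 0 ≤ t →
      ‖NormedSpace.exp (t • T) i j‖ ≤ Real.exp (s₀ * t) * Df K ((j : ℕ) - (i : ℕ)) t := by
  intro k
  induction k using Nat.strong_induction_on with
  | _ k IH =>
  intro i j hk t ht
  by_cases hji : j < i
  · rw [exp_tri T htri i j hji t, norm_zero]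
    exact mul_nonneg (Real.exp_pos _).le (Df_nonneg hK0 ht _)
  push_neg at hji  -- i ≤ j
  set c : ℂ := T i i with hc
  set u : ℝ → ℂ := fun s => NormedSpace.exp (s • T) i j with hu
  set R : ℝ → ℂ := fun s => ∑ l ∈ Finset.Ioc i j, T i l * NormedSpace.exp (s • T) l j with hR
  have hsplit : ∀ s : ℝ, (∑ l : Fin m, T i l * NormedSpace.exp (s • T) l j) = c * u s + R s := by
    intro s
    rw [← Finset.add_sum_erase _ _ (Finset.mem_univ i)]
    congr 1
    refine (Finset.sum_subset ?_ ?_).symm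
    · intro l hl
      rw [Finset.mem_Ioc] at hl
      exact Finset.mem_erase.mpr ⟨hl.1.ne', Finset.mem_univ l⟩
    · intro l hle hlnot
      have hlne : l ≠ i := (Finset.mem_erase.mp hle).1
      rw [Finset.mem_Ioc] at hlnot
      push_neg at hlnot
      rcases lt_or_gt_of_ne hlne with h | h
      · rw [htri i l h, zero_mul]
      · rw [exp_tri T htri l j (hlnot h), mul_zero]
  have hw : ∀ s : ℝ, HasDerivAt (fun r : ℝ => Complex.exp ((r : ℂ) * -c) * u r)
      (Complex.exp ((s : ℂ) * -c) * R s) s := by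
    intro s
    have hlin : HasDerivAt (fun r : ℝ => (r : ℂ) * -c) (-c) s := by
      have h1 : HasDerivAt (fun r : ℝ => r • (-c)) ((1 : ℝ) • (-c)) s :=
        (hasDerivAt_id s).smul_const (-c)
      simpa [Complex.real_smul] using h1
    have hexp := hlin.cexp
    have hmul := hexp.mul (exp_entry_deriv T i j s)
    have heq : Complex.exp ((s : ℂ) * -c) * R s =
        Complex.exp ((s : ℂ) * -c) * -c * u s +
          Complex.exp ((s : ℂ) * -c) * ∑ l : Fin m, T i l * NormedSpace.exp (s • T) l j := by
      rw [hsplit s]; ring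
    rw [heq]
    exact hmul
  have hcontR : Continuous R := by
    apply continuous_finset_sum
    intro l _
    exact continuous_const.mul (exp_entry_continuous T l j)
  have hcontI : Continuous (fun r : ℝ => Complex.exp ((r : ℂ) * -c) * R r) :=
    ((Complex.continuous_exp.comp (Complex.continuous_ofReal.mul continuous_const)).mul hcontR)
  have hFTC : ∫ r in (0:ℝ)..t, Complex.exp ((r : ℂ) * -c) * R r =
      Complex.exp ((t : ℂ) * -c) * u t - u 0 := by
    have := intervalIntegral.integral_eq_sub_of_hasDerivAt
      (f := fun r : ℝ => Complex.exp ((r : ℂ) * -c) * u r)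
      (fun r _ => hw r) (hcontI.intervalIntegrable 0 t)
    rw [this]
    norm_num
  have hsolve : u t = Complex.exp ((t : ℂ) * c) *
      (u 0 + ∫ r in (0:ℝ)..t, Complex.exp ((r : ℂ) * -c) * R r) := by
    rw [hFTC]
    have h1 : Complex.exp ((t : ℂ) * c) * Complex.exp ((t : ℂ) * -c) = 1 := by
      rw [← Complex.exp_add, show (t : ℂ) * c + (t : ℂ) * -c = 0 by ring, Complex.exp_zero]
    calc u t = (Complex.exp ((t : ℂ) * c) * Complex.exp ((t : ℂ) * -c)) * u t := by
          rw [h1, one_mul]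
    _ = Complex.exp ((t : ℂ) * c) * (u 0 + (Complex.exp ((t : ℂ) * -c) * u t - u 0)) := by ring
  have hnormexp : ∀ r : ℝ, ∀ z : ℂ, ‖Complex.exp ((r : ℂ) * z)‖ = Real.exp (r * z.re) := by
    intro r z
    rw [Complex.norm_exp]
    congr 1
    simp [Complex.mul_re]
  have hcre : c.re ≤ s₀ := hdiag i
  rcases eq_or_lt_of_le hji with heq | hlt
  · -- diagonal case : i = j
    have hIoc : Finset.Ioc i j = ∅ := by rw [← heq]; exact Finset.Ioc_self _
    have hR0 : ∀ s : ℝ, R s = 0 := by intro s; rw [hR]; simp [hIoc]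
    have hu0 : u 0 = 1 := by
      rw [hu]
      show NormedSpace.exp ((0:ℝ) • T) i j = 1
      rw [zero_smul, NormedSpace.exp_zero]
      rw [← heq]
      exact Matrix.one_apply_eq i
    have hint0 : (∫ r in (0:ℝ)..t, Complex.exp ((r : ℂ) * -c) * R r) = 0 := by
      have : (fun r : ℝ => Complex.exp ((r : ℂ) * -c) * R r) = fun _ => (0:ℂ) := by
        funext r; rw [hR0 r, mul_zero]
      rw [this]
      simp
    have hk0 : (j : ℕ) - (i : ℕ) = 0 := by omega
    rw [hk0]
    show ‖u t‖ ≤ Real.exp (s₀ * t) * Df K 0 t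
    rw [hsolve, hint0, hu0]
    show ‖Complex.exp ((t : ℂ) * c) * (1 + 0)‖ ≤ Real.exp (s₀ * t) * Df K 0 t
    rw [add_zero, mul_one, hnormexp, show Df K 0 t = 1 from rfl, mul_one]
    apply Real.exp_le_exp.mpr
    calc t * c.re ≤ t * s₀ := mul_le_mul_of_nonneg_left hcre ht
    _ = s₀ * t := mul_comm _ _
  · -- off-diagonal case : i < j
    have hk1 : 1 ≤ k := by
      have : (i : ℕ) < (j : ℕ) := hlt
      omega
    have hu0 : u 0 = 0 := by
      rw [hu]
      show NormedSpace.exp ((0:ℝ) • T) i j = 0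
      rw [zero_smul, NormedSpace.exp_zero]
      exact Matrix.one_apply_ne hlt.ne
    set C : ℝ := K * Real.exp ((s₀ - c.re) * t) * (1 + 2*K*t)^(k-1) with hC
    have hbound : ∀ r ∈ Set.uIoc (0:ℝ) t, ‖Complex.exp ((r : ℂ) * -c) * R r‖ ≤ C := by
      intro r hr
      rw [Set.uIoc_of_le ht] at hr
      obtain ⟨hr0, hrt⟩ := hr
      have hr0' : (0:ℝ) ≤ r := hr0.le
      have hRb : ‖R r‖ ≤ K * Real.exp (s₀ * r) * (1 + 2*K*r)^(k-1) := by
        calc ‖R r‖ ≤ ∑ l ∈ Finset.Ioc i j, ‖T i l * NormedSpace.exp (r • T) l j‖ :=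
            norm_sum_le _ _
        _ ≤ ∑ l ∈ Finset.Ioc i j, K * (Real.exp (s₀ * r) * Df K ((j:ℕ) - (l:ℕ)) r) := by
            apply Finset.sum_le_sum
            intro l hl
            rw [Finset.mem_Ioc] at hl
            have hlk : (j : ℕ) - (l : ℕ) < k := by
              have h1 : (i : ℕ) < (l : ℕ) := hl.1
              have h2 : (l : ℕ) ≤ (j : ℕ) := hl.2
              omega
            rw [norm_mul]
            apply mul_le_mul (hK i l) (IH _ hlk l j rfl r hr0') (norm_nonneg _) hK0
        _ = K * Real.exp (s₀ * r) * ∑ l ∈ Finset.Ioc i j, Df K ((j:ℕ) - (l:ℕ)) r := by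
            rw [Finset.mul_sum]
            congr 1
            funext l
            ring
        _ ≤ K * Real.exp (s₀ * r) * (1 + 2*K*r)^(k-1) := by
            apply mul_le_mul_of_nonneg_left _ (by positivity)
            have himg : ∑ l ∈ Finset.Ioc i j, Df K ((j:ℕ) - (l:ℕ)) r =
                ∑ n ∈ (Finset.Ioc i j).image (fun l : Fin m => (j:ℕ) - (l:ℕ)), Df K n r := by
              refine (Finset.sum_image (f := fun n => Df K n r) ?_).symm
              intro a ha b hb hab
              simp only [Finset.mem_coe, Finset.mem_Ioc] at ha hb
              have ha2 : (a : ℕ) ≤ (j : ℕ) := ha.2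
              have hb2 : (b : ℕ) ≤ (j : ℕ) := hb.2
              exact Fin.ext (by simp only at hab; omega)
            rw [himg]
            have hsub : (Finset.Ioc i j).image (fun l : Fin m => (j:ℕ) - (l:ℕ)) ⊆
                Finset.range k := by
              intro n hn
              rw [Finset.mem_image] at hn
              obtain ⟨l, hl, rfl⟩ := hn
              rw [Finset.mem_Ioc] at hl
              have h1 : (i : ℕ) < (l : ℕ) := hl.1
              rw [Finset.mem_range]
              omega
            calc ∑ n ∈ (Finset.Ioc i j).image (fun l : Fin m => (j:ℕ) - (l:ℕ)), Df K n r
                ≤ ∑ n ∈ Finset.range k, Df K n r := by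
                  apply Finset.sum_le_sum_of_subset_of_nonneg hsub
                  intro n _ _
                  exact Df_nonneg hK0 hr0' n
            _ = (1 + 2*K*r)^(k-1) := by
                conv_lhs => rw [show k = (k-1)+1 by omega]
                exact Df_sum K r (k-1)
      rw [norm_mul, hnormexp]
      calc Real.exp (r * (-c).re) * ‖R r‖
          ≤ Real.exp (r * (-c).re) * (K * Real.exp (s₀ * r) * (1 + 2*K*r)^(k-1)) :=
            mul_le_mul_of_nonneg_left hRb (Real.exp_pos _).le
      _ = K * Real.exp ((s₀ - c.re) * r) * (1 + 2*K*r)^(k-1) := by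
          rw [Complex.neg_re,
            show Real.exp (r * -c.re) * (K * Real.exp (s₀ * r) * (1 + 2*K*r)^(k-1)) =
              K * (Real.exp (r * -c.re) * Real.exp (s₀ * r)) * (1 + 2*K*r)^(k-1) by ring,
            ← Real.exp_add, show r * -c.re + s₀ * r = (s₀ - c.re) * r by ring]
      _ ≤ C := by
          rw [hC]
          apply mul_le_mul
          · apply mul_le_mul_of_nonneg_left _ hK0
            apply Real.exp_le_exp.mpr
            apply mul_le_mul_of_nonneg_left hrt
            linarith
          · apply pow_le_pow_left₀ (by positivity)
            nlinarith
          · positivity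
          · positivity
    have hintb : ‖∫ r in (0:ℝ)..t, Complex.exp ((r : ℂ) * -c) * R r‖ ≤ C * t := by
      have := intervalIntegral.norm_integral_le_of_norm_le_const hbound
      rwa [sub_zero, abs_of_nonneg ht] at this
    show ‖u t‖ ≤ Real.exp (s₀ * t) * Df K ((j:ℕ) - (i:ℕ)) t
    rw [hsolve, hu0, zero_add, norm_mul, hnormexp]
    have hCnn : 0 ≤ C := by
      rw [hC]; positivity
    calc Real.exp (t * c.re) * ‖∫ r in (0:ℝ)..t, Complex.exp ((r : ℂ) * -c) * R r‖
        ≤ Real.exp (t * c.re) * (C * t) :=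
          mul_le_mul_of_nonneg_left hintb (Real.exp_pos _).le
    _ = K * t * Real.exp (s₀ * t) * (1 + 2*K*t)^(k-1) := by
        rw [hC,
          show Real.exp (t * c.re) * (K * Real.exp ((s₀ - c.re) * t) * (1 + 2*K*t)^(k-1) * t) =
            K * t * (Real.exp (t * c.re) * Real.exp ((s₀ - c.re) * t)) * (1 + 2*K*t)^(k-1) by
              ring,
          ← Real.exp_add, show t * c.re + (s₀ - c.re) * t = s₀ * t by ring]
    _ ≤ Real.exp (s₀ * t) * Df K ((j:ℕ) - (i:ℕ)) t := by
        rw [hk, show k = (k-1)+1 by omega]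
        show K * t * Real.exp (s₀ * t) * (1 + 2*K*t)^(k-1) ≤
          Real.exp (s₀ * t) * (2*K*t*(1 + 2*K*t)^(k-1))
        have h1 : (0:ℝ) ≤ (1 + 2*K*t)^(k-1) := by positivity
        nlinarith [mul_nonneg (mul_nonneg (mul_nonneg hK0 ht) (Real.exp_pos (s₀ * t)).le) h1]




lemma key_triangular {m : ℕ} (hm : 1 ≤ m) (T : Matrix (Fin m) (Fin m) ℂ) (s₀ K : ℝ)
    (hK0 : 0 ≤ K) (htri : ∀ i j : Fin m, j < i → T i j = 0)
    (hdiag : ∀ i, (T i i).re ≤ s₀) (hK : ∀ i j, ‖T i j‖ ≤ K) :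
    ∀ t : ℝ, 0 ≤ t →
      ‖NormedSpace.exp (t • T)‖ ≤ Real.exp (s₀ * t) * (1+2*K*t)^(m-1) := by
  intro t ht
  have hmain := entry_bound T s₀ K hK0 htri hdiag hK
  set G : ℕ → Matrix (Fin m) (Fin m) ℂ := fun k => Matrix.of (fun i j =>
    if (j:ℕ) = (i:ℕ) + k then NormedSpace.exp (t • T) i j else 0) with hG
  have hdecomp : NormedSpace.exp (t • T) = ∑ k ∈ Finset.range m, G k := by
    ext i j
    rw [Matrix.sum_apply]
    by_cases hij : (i:ℕ) ≤ (j:ℕ)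
    · rw [Finset.sum_eq_single ((j:ℕ) - (i:ℕ))]
      · simp only [hG, Matrix.of_apply]
        rw [if_pos (by omega)]
      · intro b _ hb
        simp only [hG, Matrix.of_apply]
        rw [if_neg (by omega)]
      · intro hnot
        exfalso
        exact hnot (Finset.mem_range.mpr (by have := j.isLt; omega))
    · push_neg at hij
      have hji : j < i := hij
      rw [exp_tri T htri i j hji t]
      symm
      apply Finset.sum_eq_zero
      intro b _
      simp only [hG, Matrix.of_apply]
      rw [if_neg (by omega)]
  rw [hdecomp]
  calc ‖∑ k ∈ Finset.range m, G k‖ ≤ ∑ k ∈ Finset.range m, ‖G k‖ := norm_sum_le _ _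
  _ ≤ ∑ k ∈ Finset.range m, Real.exp (s₀ * t) * Df K k t := by
      apply Finset.sum_le_sum
      intro k _
      apply superdiag_norm (G k) k _
        (mul_nonneg (Real.exp_pos _).le (Df_nonneg hK0 ht k))
      · intro i j hne
        by_contra hne2
        apply hne
        simp only [hG, Matrix.of_apply]
        rw [if_neg hne2]
      · intro i j
        simp only [hG, Matrix.of_apply]
        by_cases hcase : (j:ℕ) = (i:ℕ) + k
        · rw [if_pos hcase]
          have := hmain ((j:ℕ) - (i:ℕ)) i j rfl t ht
          have hjik : (j:ℕ) - (i:ℕ) = k := by omega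
          rw [hjik] at this
          exact this
        · rw [if_neg hcase, norm_zero]
          exact mul_nonneg (Real.exp_pos _).le (Df_nonneg hK0 ht k)
  _ = Real.exp (s₀ * t) * (1+2*K*t)^(m-1) := by
      rw [← Finset.mul_sum]
      congr 1
      conv_lhs => rw [show m = (m-1)+1 by omega]
      exact Df_sum K t (m-1)




end ShilovAux

/-- If every eigenvalue `λ` of the `m × m` complex matrix `A` satisfies `Re λ ≤ s₀`, then
for every `t ≥ 0`, `‖exp(tA)‖ ≤ e^{s₀ t} (1 + 2t)^{m-1} (1 + ‖A‖)^{m-1}`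
(operator norm induced by the Euclidean norm on `ℂ^m`). -/
theorem norm_exp_le_of_spectrum_re_le (m : ℕ) (hm : 1 ≤ m)
    (A : Matrix (Fin m) (Fin m) ℂ) (s₀ : ℝ)
    (hs : ∀ l ∈ spectrum ℂ A, l.re ≤ s₀) :
    ∀ t : ℝ, 0 ≤ t →
      ‖NormedSpace.exp (t • A)‖ ≤
        Real.exp (s₀ * t) * (1 + 2 * t) ^ (m - 1) * (1 + ‖A‖) ^ (m - 1) := by
  intro t ht
  set esb : OrthonormalBasis (Fin m) ℂ (EuclideanSpace ℂ (Fin m)) :=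
    EuclideanSpace.basisFun (Fin m) ℂ with hesb
  set g := PsiM esb A with hg
  obtain ⟨b, hb⟩ := schur_aux m (EuclideanSpace ℂ (Fin m)) finrank_euclideanSpace_fin
    (g : _ →ₗ[ℂ] _)
  set T := LinearMap.toMatrix b.toBasis b.toBasis (g : _ →ₗ[ℂ] _) with hT
  have hTsym : T = (PsiM b).symm g := (PsiM_symm_apply b g).symm
  have hPsiT : PsiM b T = g := by rw [hTsym, AlgEquiv.apply_symm_apply]
  have hentry : ∀ i j, T i j = ⟪b i, g (b j)⟫_ℂ := by
    intro i j
    rw [hT, LinearMap.toMatrix_apply, OrthonormalBasis.coe_toBasis,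
      OrthonormalBasis.coe_toBasis_repr_apply, OrthonormalBasis.repr_apply_apply]
    rfl
  have htri : ∀ i j : Fin m, j < i → T i j = 0 := fun i j h => by
    rw [hentry]; exact hb i j h
  have hnormA : ‖g‖ = ‖A‖ := PsiM_norm esb A
  have hKbound : ∀ i j, ‖T i j‖ ≤ ‖A‖ := by
    intro i j
    rw [hentry]
    calc ‖⟪b i, g (b j)⟫_ℂ‖ ≤ ‖b i‖ * ‖g (b j)‖ := norm_inner_le_norm _ _
    _ = ‖g (b j)‖ := by rw [b.orthonormal.1 i, one_mul]
    _ ≤ ‖g‖ * ‖b j‖ := g.le_opNorm _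
    _ = ‖A‖ := by rw [b.orthonormal.1 j, mul_one, hnormA]
  have hspecT : spectrum ℂ T = spectrum ℂ A := by
    rw [hTsym, AlgEquiv.spectrum_eq ((PsiM b).symm) g, hg,
      AlgEquiv.spectrum_eq (PsiM esb) A]
  have hdiag : ∀ i, (T i i).re ≤ s₀ := by
    intro i
    apply hs
    rw [← hspecT, spectrum.mem_iff]
    intro hunit
    have htri2 : (algebraMap ℂ (Matrix (Fin m) (Fin m) ℂ) (T i i) - T).BlockTriangular id := by
      intro p q h
      have h1 : T p q = 0 := htri p q h
      have h2 : p ≠ q := (ne_of_lt h).symm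
      rw [Matrix.sub_apply, h1, Matrix.algebraMap_matrix_apply, if_neg h2, sub_zero]
    have hdet : (algebraMap ℂ (Matrix (Fin m) (Fin m) ℂ) (T i i) - T).det = 0 := by
      rw [Matrix.det_of_upperTriangular htri2]
      apply Finset.prod_eq_zero (Finset.mem_univ i)
      rw [Matrix.sub_apply, Matrix.algebraMap_matrix_apply, if_pos rfl]
      simp
    rw [Matrix.isUnit_iff_isUnit_det, hdet] at hunit
    simpa using hunit
  have hcont : ∀ (b' : OrthonormalBasis (Fin m) ℂ (EuclideanSpace ℂ (Fin m))),
      Continuous (PsiM b') := fun b' =>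
    LinearMap.continuous_of_finiteDimensional ((PsiM b').toLinearMap)
  have hexp_comm : ∀ (b' : OrthonormalBasis (Fin m) ℂ (EuclideanSpace ℂ (Fin m)))
      (M : Matrix (Fin m) (Fin m) ℂ),
      PsiM b' (NormedSpace.exp (t • M)) = NormedSpace.exp (t • PsiM b' M) := by
    intro b' M
    rw [NormedSpace.map_exp_of_mem_ball (𝕂 := ℂ) (PsiM b') (hcont b') _
      ((NormedSpace.expSeries_radius_eq_top ℂ (Matrix (Fin m) (Fin m) ℂ)).symm ▸ edist_lt_top _ _)]
    congr 1
    exact LinearMap.map_smul_of_tower ((PsiM b').toLinearMap) t M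
  have h1 : ‖NormedSpace.exp (t • A)‖ = ‖NormedSpace.exp (t • T)‖ := by
    rw [← PsiM_norm esb (NormedSpace.exp (t • A)), ← PsiM_norm b (NormedSpace.exp (t • T)),
      hexp_comm, hexp_comm, hPsiT, ← hg]
  rw [h1]
  have h2 := key_triangular hm T s₀ ‖A‖ (norm_nonneg A) htri hdiag hKbound t ht
  refine h2.trans ?_
  rw [mul_assoc (Real.exp (s₀ * t)) ((1 + 2*t)^(m-1)) ((1 + ‖A‖)^(m-1))]
  apply mul_le_mul_of_nonneg_left _ (Real.exp_pos _).le
  rw [← mul_pow]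
  apply pow_le_pow_left₀ (by positivity)
  nlinarith [norm_nonneg A, ht]
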